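/- Let f : T → S be a rigid surjection between ordered trees, let x ∈ ℓ(S), and let y ∈ ℓ(T) be f-conjugate to x (i.e., i-conjugate to x where i is the injection of f). Then f[T^y] = S^x, and f_x := f↾T^y is a rigid surjection from T^y onto S^x. -/

import Mathlib

/-- An ordered tree: a finite poset (`tle`, the tree order `⊑`) with a root,
linearly ordered predecessor sets, binary meets, together with a linear order
`lin` (the lexicographic order `≤`) extending the tree order and coherent with
the tree structure (determined on subtrees above incomparable vertices). -/
structure OTree (α : Type) [Finite α] where
  tle : α → α → Prop
  tle_refl : ∀ v, tle v v
  tle_trans : ∀ u v w, tle u v → tle v w → tle u w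
  tle_antisymm : ∀ v w, tle v w → tle w v → v = w
  root : α
  root_le : ∀ v, tle root v
  pred_chain : ∀ v x y, tle x v → tle y v → tle x y ∨ tle y x
  meet : α → α → α
  meet_le_left : ∀ v w, tle (meet v w) v
  meet_le_right : ∀ v w, tle (meet v w) w
  le_meet : ∀ x v w, tle x v → tle x w → tle x (meet v w)
  lin : α → α → Prop
  lin_refl : ∀ v, lin v v
  lin_trans : ∀ u v w, lin u v → lin v w → lin u w
  lin_antisymm : ∀ v w, lin v w → lin w v → v = w
  lin_total : ∀ v w, lin v w ∨ lin w v
  tle_lin : ∀ v w, tle v w → lin v w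
  lex_coh : ∀ v w v' w', tle v v' → tle w w' → ¬ tle v w → ¬ tle w v → (lin v' w' ↔ lin v w)

variable {α β γ : Type} [Finite α] [Finite β] [Finite γ]

/-- A morphism of ordered trees: preserves meets, the lexicographic order, and the root. -/
def IsMorphism (S : OTree α) (T : OTree β) (e : α → β) : Prop :=
  (∀ v w, e (S.meet v w) = T.meet (e v) (e w)) ∧
  (∀ v w, S.lin v w → T.lin (e v) (e w)) ∧
  e S.root = T.root

/-- An embedding is an injective morphism. -/
def IsEmbedding (S : OTree α) (T : OTree β) (e : α → β) : Prop :=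
  IsMorphism S T e ∧ Function.Injective e

/-- `e` witnesses that `f : T → S` is a rigid surjection: `e` is a morphism with
`f ∘ e = id_S` and `e ∘ f ⊑_T id_T` pointwise.  Such `e` is called the injection of `f`. -/
def IsInjectionOf (T : OTree β) (S : OTree α) (f : β → α) (e : α → β) : Prop :=
  IsMorphism S T e ∧ (∀ v, f (e v) = v) ∧ (∀ w, T.tle (e (f w)) w)

/-- `f : T → S` is a rigid surjection. -/
def IsRigidSurj (T : OTree β) (S : OTree α) (f : β → α) : Prop :=
  ∃ e, IsInjectionOf T S f e

/-- `e` maps the `≤_S`-largest vertex (= largest leaf) of `S` to the `≤_T`-largest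
vertex of `T`. -/
def IsSealedInj (T : OTree β) (S : OTree α) (e : α → β) : Prop :=
  ∀ s t, (∀ v, S.lin v s) → (∀ w, T.lin w t) → e s = t

/-- A sealed rigid surjection. -/
def IsSealedRS (T : OTree β) (S : OTree α) (f : β → α) : Prop :=
  ∃ e, IsInjectionOf T S f e ∧ IsSealedInj T S e

/-- The initial subtree `T^v = {w : w ≤_T v}`. -/
def OTree.initSeg (T : OTree β) (v : β) : Set β := {w | T.lin w v}

/-- Restriction of an ordered tree to a nonempty `⊑`-downward closed subset. -/
def OTree.restrict (T : OTree β) (T' : Set β) (hne : T'.Nonempty)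
    (hdc : ∀ v w, T.tle v w → w ∈ T' → v ∈ T') : OTree T' where
  tle v w := T.tle v.1 w.1
  tle_refl v := T.tle_refl v.1
  tle_trans u v w h1 h2 := T.tle_trans u.1 v.1 w.1 h1 h2
  tle_antisymm v w h1 h2 := Subtype.ext (T.tle_antisymm v.1 w.1 h1 h2)
  root := ⟨T.root, hdc T.root hne.some (T.root_le hne.some) hne.some_mem⟩
  root_le v := T.root_le v.1
  pred_chain v x y h1 h2 := T.pred_chain v.1 x.1 y.1 h1 h2
  meet v w := ⟨T.meet v.1 w.1, hdc (T.meet v.1 w.1) v.1 (T.meet_le_left v.1 w.1) v.2⟩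
  meet_le_left v w := T.meet_le_left v.1 w.1
  meet_le_right v w := T.meet_le_right v.1 w.1
  le_meet x v w h1 h2 := T.le_meet x.1 v.1 w.1 h1 h2
  lin v w := T.lin v.1 w.1
  lin_refl v := T.lin_refl v.1
  lin_trans u v w h1 h2 := T.lin_trans u.1 v.1 w.1 h1 h2
  lin_antisymm v w h1 h2 := Subtype.ext (T.lin_antisymm v.1 w.1 h1 h2)
  lin_total v w := T.lin_total v.1 w.1
  tle_lin v w h := T.tle_lin v.1 w.1 h
  lex_coh v w v' w' h1 h2 h3 h4 := T.lex_coh v.1 w.1 v'.1 w'.1 h1 h2 h3 h4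

/-- The initial subtree `T^v` as an ordered tree. -/
def OTree.init (T : OTree β) (v : β) : OTree (T.initSeg v) :=
  T.restrict (T.initSeg v) ⟨v, T.lin_refl v⟩
    (fun a b hab hb => T.lin_trans a b v (T.tle_lin a b hab) hb)

/-- A leaf: a `⊑`-maximal vertex. -/
def OTree.Leaf (T : OTree β) (y : β) : Prop := ∀ w, T.tle y w → w = y

/-- Strict lexicographic order. -/
def linLt (T : OTree β) (v w : β) : Prop := T.lin v w ∧ v ≠ w

/-- `y` is `i`-conjugate to `x` (for leaves `x` of `S`, `y` of `T`). -/
def Conj (S : OTree α) (T : OTree β) (i : α → β) (x : α) (y : β) : Prop :=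
  S.Leaf x ∧ T.Leaf y ∧
  (((∀ z, S.Leaf z → S.lin z x) ∧ (∀ z, T.Leaf z → T.lin z y)) ∨
   (∃ x', S.Leaf x' ∧ linLt S x x' ∧ (∀ z, S.Leaf z → linLt S x z → S.lin x' z) ∧
      linLt T y (i x') ∧ T.meet (i x) (i x') = T.meet y (i x') ∧
      (∀ z, T.Leaf z → linLt T z (i x') → T.meet (i x) (i x') = T.meet z (i x') → T.lin z y)))

lemma tle_iff_meet_eq (S : OTree α) {a b : α} : S.tle a b ↔ S.meet a b = a := by
  constructor
  · intro h
    exact S.tle_antisymm _ _ (S.meet_le_left a b) (S.le_meet a a b (S.tle_refl a) h)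
  · intro h
    have := S.meet_le_right a b
    rwa [h] at this

lemma leaf_above (T : OTree β) (v : β) : ∃ z, T.Leaf z ∧ T.tle v z := by
  letI : PartialOrder β :=
    { le := T.lin, le_refl := T.lin_refl,
      le_trans := T.lin_trans, le_antisymm := T.lin_antisymm }
  have hU : ({w | T.tle v w} : Set β).Finite := Set.toFinite _
  obtain ⟨z, hz, hmax⟩ : ∃ a ∈ {w | T.tle v w}, ∀ a' ∈ {w | T.tle v w}, T.lin a a' → a = a' := by
    obtain ⟨z, hz⟩ := hU.exists_maximal ⟨v, T.tle_refl v⟩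
    exact ⟨z, hz.prop, fun a' ha' h => hz.eq_of_le ha' h⟩
  refine ⟨z, ?_, hz⟩
  intro w hw
  have hw' : w ∈ {w | T.tle v w} := T.tle_trans _ _ _ hz hw
  exact (hmax w hw' (T.tle_lin _ _ hw)).symm

lemma key_lemma (S : OTree α) (T : OTree β) (f : β → α) (i : α → β)
    (hf : IsInjectionOf T S f i) (x : α) (y : β) (hc : Conj S T i x y) :
    ∀ v, S.lin v x ↔ T.lin (i v) y := by
  obtain ⟨⟨hmeet, hlin, hroot⟩, hfi, htle⟩ := hf
  have hinj : Function.Injective i := fun a b h => by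
    have h1 := hfi a; rw [h, hfi b] at h1; exact h1.symm
  have itle : ∀ a b, S.tle a b → T.tle (i a) (i b) := by
    intro a b h
    rw [tle_iff_meet_eq] at h ⊢
    rw [← hmeet, h]
  have itle' : ∀ a b, T.tle (i a) (i b) → S.tle a b := by
    intro a b h
    rw [tle_iff_meet_eq] at h ⊢
    apply hinj
    rw [hmeet]; exact h
  obtain ⟨hx, hy, hcase⟩ := hc
  rcases hcase with ⟨h1, h2⟩ | ⟨x', hx', hxx', hmin, hyx', hmeq, hmax⟩
  · intro v
    constructor
    · intro _
      obtain ⟨z, hzl, hzt⟩ := leaf_above T (i v)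
      exact T.lin_trans _ _ _ (T.tle_lin _ _ hzt) (h2 z hzl)
    · intro _
      obtain ⟨z, hzl, hzt⟩ := leaf_above S v
      exact S.lin_trans _ _ _ (S.tle_lin _ _ hzt) (h1 z hzl)
  · have hnxx' : ¬ S.tle x x' := fun h => hxx'.2 (hx x' h).symm
    have hnx'x : ¬ S.tle x' x := fun h => hxx'.2 (hx' x h)
    have hnixix' : ¬ T.tle (i x) (i x') := fun h => hnxx' (itle' _ _ h)
    have hnix'ix : ¬ T.tle (i x') (i x) := fun h => hnx'x (itle' _ _ h)
    -- ix ≤lin y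
    have hixy : T.lin (i x) y := by
      obtain ⟨z, hzl, hzt⟩ := leaf_above T (i x)
      have hzx' : T.lin z (i x') :=
        (T.lex_coh (i x) (i x') z (i x') hzt (T.tle_refl _) hnixix' hnix'ix).mpr
          (hlin _ _ hxx'.1)
      have hzne : z ≠ i x' := fun h => hnixix' (h ▸ hzt)
      have hmz : T.meet (i x) (i x') = T.meet z (i x') := by
        have hm1 : T.tle (T.meet (i x) (i x')) (T.meet z (i x')) :=
          T.le_meet _ _ _ (T.tle_trans _ _ _ (T.meet_le_left _ _) hzt)
            (T.meet_le_right _ _)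
        rcases T.pred_chain z (T.meet z (i x')) (i x) (T.meet_le_left _ _) hzt with h | h
        · have hm2 : T.tle (T.meet z (i x')) (T.meet (i x) (i x')) :=
            T.le_meet _ _ _ h (T.meet_le_right _ _)
          exact T.tle_antisymm _ _ hm1 hm2
        · exact absurd (T.tle_trans _ _ _ h (T.meet_le_right z (i x'))) hnixix'
      have hzy : T.lin z y := hmax z hzl ⟨hzx', hzne⟩ hmz
      exact T.lin_trans _ _ _ (T.tle_lin _ _ hzt) hzy
    intro v
    constructor
    · intro hv
      exact T.lin_trans _ _ _ (hlin _ _ hv) hixy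
    · intro hivy
      by_contra hnv
      have hvx : S.lin x v := (S.lin_total v x).resolve_left hnv
      by_cases hx'v : S.lin x' v
      · have h1 : T.lin (i x') (i v) := hlin _ _ hx'v
        have h2 : T.lin y (i v) := T.lin_trans _ _ _ hyx'.1 h1
        have hne2 : y ≠ i v := by
          intro h
          apply hyx'.2
          exact T.lin_antisymm _ _ hyx'.1 (h ▸ h1)
        exact hne2 (T.lin_antisymm _ _ h2 hivy)
      · have hvx' : S.lin v x' := (S.lin_total v x').resolve_right hx'v
        have hvnex' : v ≠ x' := fun h => hx'v (h ▸ S.lin_refl v)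
        have htvx' : S.tle v x' := by
          by_contra hn
          have hnx'v : ¬ S.tle x' v := fun h => hvnex' (hx' v h)
          obtain ⟨z, hzl, hzt⟩ := leaf_above S v
          have hzx' : S.lin z x' :=
            (S.lex_coh v x' z x' hzt (S.tle_refl x') hn hnx'v).mpr hvx'
          have hxz : linLt S x z := by
            refine ⟨S.lin_trans _ _ _ hvx (S.tle_lin _ _ hzt), ?_⟩
            intro h
            exact hnv (h ▸ (S.tle_lin _ _ hzt))
          have hx'z : S.lin x' z := hmin z hzl hxz
          have hzeq : z = x' := S.lin_antisymm _ _ hzx' hx'z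
          exact hn (hzeq ▸ hzt)
        have hm0v : S.tle (S.meet x x') v := by
          rcases S.pred_chain x' v (S.meet x x') htvx' (S.meet_le_right x x') with h | h
          · exact absurd (S.tle_lin _ _ (S.tle_trans _ _ _ h (S.meet_le_left x x'))) hnv
          · exact h
        have hm0ne : S.meet x x' ≠ v := fun h =>
          hnv (S.tle_lin _ _ (h ▸ S.meet_le_left x x'))
        have hniyv : ¬ T.tle y (i v) := by
          intro h
          have h1 : i v = y := hy _ h
          have h2 : T.tle y (i x') := h1 ▸ itle v x' htvx'
          exact hyx'.2 (hy _ h2).symm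
        have hnivy : ¬ T.tle (i v) y := by
          intro h
          have h1 : T.tle (i v) (T.meet y (i x')) :=
            T.le_meet _ _ _ h (itle v x' htvx')
          rw [← hmeq, ← hmeet] at h1
          have h2 : T.tle (i (S.meet x x')) (i v) := itle _ _ hm0v
          exact hm0ne (hinj (T.tle_antisymm _ _ h2 h1))
        have hcoh := T.lex_coh (i v) y (i x') y (itle v x' htvx') (T.tle_refl y)
          hnivy hniyv
        have hnlin : ¬ T.lin (i x') y := fun h =>
          hyx'.2 (T.lin_antisymm _ _ hyx'.1 h)
        exact hnlin (hcoh.mpr hivy)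

/-- If `y` is `f`-conjugate to `x`, then `f[T^y] = S^x` and `f_x = f ↾ T^y` is a
rigid surjection from `T^y` onto `S^x`. -/
theorem stmt11 (S : OTree α) (T : OTree β) (f : β → α) (i : α → β)
    (hf : IsInjectionOf T S f i) (x : α) (y : β) (hc : Conj S T i x y) :
    f '' (T.initSeg y) = S.initSeg x ∧
    ∃ hm : Set.MapsTo f (T.initSeg y) (S.initSeg x),
      IsRigidSurj (T.init y) (S.init x) (Set.MapsTo.restrict _ _ _ hm) := by
  have hkey := key_lemma S T f i hf x y hc
  obtain ⟨⟨hmeet, hlin, hroot⟩, hfi, htle⟩ := hf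
  have hfwd : ∀ w, T.lin w y → S.lin (f w) x := by
    intro w hw
    apply (hkey (f w)).mpr
    exact T.lin_trans _ _ _ (T.tle_lin _ _ (htle w)) hw
  have himg : f '' (T.initSeg y) = S.initSeg x := by
    ext v
    constructor
    · rintro ⟨w, hw, rfl⟩
      exact hfwd w hw
    · intro hv
      exact ⟨i v, (hkey v).mp hv, hfi v⟩
  refine ⟨himg, fun w hw => hfwd w hw, ?_⟩
  refine ⟨fun v => ⟨i v.1, (hkey v.1).mp v.2⟩, ⟨?_, ?_, ?_⟩, ?_, ?_⟩
  · intro v w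
    exact Subtype.ext (hmeet v.1 w.1)
  · intro v w h
    exact hlin v.1 w.1 h
  · exact Subtype.ext hroot
  · intro v
    exact Subtype.ext (hfi v.1)
  · intro w
    exact htle w.1
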